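/- Weak stable equivalence of flabby classes is transitive (and hence an equivalence relation). Precisely: let G, G′, G″ be finite groups and let M, M′, M″ be lattices over G, G′, G″ with flabby quotients F, F′, F″ respectively. Suppose there is a subdirect product H̃ ≤ G × G′ such that the inflations of F and F′ to H̃ are similar H̃-lattices, and a subdirect product H̃′ ≤ G′ × G″ such that the inflations of F′ and F″ to H̃′ are similar H̃′-lattices. Then there exists a subdirect product H̃″ ≤ G × G″ such that the inflations of F and F″ to H̃″ are similar H̃″-lattices. -/

import Mathlib

/- In this file, a `G`-lattice is encoded as a `Representation ℤ G M` on a ℤ-module `M`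
which is finite and free over `ℤ` (typeclass assumptions `Module.Free ℤ M`,
`Module.Finite ℤ M`). -/

attribute [instance 2000] Prod.instModule Pi.module

/-- The direct sum of two representations of a group `G` over `R`. -/
def prodRep {R G M N : Type} [CommRing R] [Group G]
    [AddCommGroup M] [Module R M] [AddCommGroup N] [Module R N]
    (ρ : Representation R G M) (τ : Representation R G N) :
    Representation R G (M × N) where
  toFun g := LinearMap.prodMap (ρ g) (τ g)
  map_one' := LinearMap.ext fun x => by simp
  map_mul' g h := LinearMap.ext fun x => by simp

/-- Inflation (or restriction) of a representation along a group homomorphism. -/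
def inflRep {R H G M : Type} [CommRing R] [Group H] [Group G]
    [AddCommGroup M] [Module R M]
    (ρ : Representation R G M) (φ : H →* G) : Representation R H M :=
  MonoidHom.comp ρ φ

/-- A permutation lattice: the module has a finite basis permuted by the group action. -/
def IsPermutationRep {R G M : Type} [CommRing R] [Group G] [AddCommGroup M] [Module R M]
    (ρ : Representation R G M) : Prop :=
  ∃ (ι : Type) (_ : Fintype ι) (b : Module.Basis ι R M),
    ∀ (g : G) (i : ι), ∃ j : ι, ρ g (b i) = b j

/-- An equivariant isomorphism between two representations. -/
def RepIso {R G M N : Type} [CommRing R] [Group G] [AddCommGroup M] [Module R M]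
    [AddCommGroup N] [Module R N]
    (ρ : Representation R G M) (τ : Representation R G N) : Prop :=
  ∃ e : M ≃ₗ[R] N, ∀ (g : G) (m : M), e (ρ g m) = τ g (e m)

/-- Flabbiness: the Tate cohomology group `Ĥ⁻¹(H, M)` vanishes for every subgroup `H ≤ G`,
i.e. every element of `M` killed by the norm element of `H` lies in the subgroup
generated by the elements `h • m' - m'` (`h ∈ H`, `m' ∈ M`). -/
def IsFlabbyRep {G M : Type} [Group G] [AddCommGroup M] [Module ℤ M]
    (ρ : Representation ℤ G M) : Prop :=
  ∀ (H : Subgroup G) (m : M),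
    (∑ᶠ h : H, ρ (h : G) m) = 0 →
      m ∈ AddSubgroup.closure {x : M | ∃ (h : H) (m' : M), x = ρ ((h : G)) m' - m'}

/-- Coflabbiness: `H¹(H, M) = 0` for every subgroup `H ≤ G`, i.e. every `1`-cocycle on `H`
with values in `M` is a coboundary. -/
def IsCoflabbyRep {G M : Type} [Group G] [AddCommGroup M] [Module ℤ M]
    (ρ : Representation ℤ G M) : Prop :=
  ∀ (H : Subgroup G) (f : H → M),
    (∀ h₁ h₂ : H, f (h₁ * h₂) = ρ ((h₁ : G)) (f h₂) + f h₁) →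
    ∃ m : M, ∀ x : H, f x = ρ ((x : G)) m - m

/-- Stably permutation: the lattice becomes permutation after adding a permutation lattice. -/
def IsStablyPermutationRep {G M : Type} [Group G] [AddCommGroup M] [Module ℤ M]
    (ρ : Representation ℤ G M) : Prop :=
  ∃ (Q : Type) (_ : AddCommGroup Q) (_ : Module ℤ Q) (σ : Representation ℤ G Q)
    (Q' : Type) (_ : AddCommGroup Q') (_ : Module ℤ Q') (σ' : Representation ℤ G Q'),
    IsPermutationRep σ ∧ IsPermutationRep σ' ∧ RepIso (prodRep ρ σ) σ'

/-- Invertible: the lattice is a direct summand of a permutation lattice. -/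
def IsInvertibleRep {G M : Type} [Group G] [AddCommGroup M] [Module ℤ M]
    (ρ : Representation ℤ G M) : Prop :=
  ∃ (N : Type) (_ : AddCommGroup N) (_ : Module ℤ N) (τ : Representation ℤ G N),
    IsPermutationRep (prodRep ρ τ)

/-- Similarity of lattices: they become isomorphic after adding permutation lattices. -/
def SimilarRep {G M N : Type} [Group G] [AddCommGroup M] [Module ℤ M]
    [AddCommGroup N] [Module ℤ N]
    (ρ : Representation ℤ G M) (τ : Representation ℤ G N) : Prop :=
  ∃ (Q : Type) (_ : AddCommGroup Q) (_ : Module ℤ Q) (σ : Representation ℤ G Q)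
    (Q' : Type) (_ : AddCommGroup Q') (_ : Module ℤ Q') (σ' : Representation ℤ G Q'),
    IsPermutationRep σ ∧ IsPermutationRep σ' ∧ RepIso (prodRep ρ σ) (prodRep τ σ')

/-- A short exact sequence `0 → M → P → F → 0` of `G`-equivariant `ℤ`-linear maps. -/
def IsEquivariantExact {G M P F : Type} [Group G] [AddCommGroup M] [Module ℤ M]
    [AddCommGroup P] [Module ℤ P] [AddCommGroup F] [Module ℤ F]
    (ρM : Representation ℤ G M) (ρP : Representation ℤ G P) (ρF : Representation ℤ G F)
    (i : M →ₗ[ℤ] P) (π : P →ₗ[ℤ] F) : Prop :=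
  Function.Injective i ∧ Function.Surjective π ∧ LinearMap.range i = LinearMap.ker π ∧
  (∀ (g : G) (m : M), i (ρM g m) = ρP g (i m)) ∧
  (∀ (g : G) (x : P), π (ρP g x) = ρF g (π x))

/-- A flabby resolution `0 → M → P → F → 0`: exact and equivariant, `P` a permutation
lattice and `F` flabby. -/
def IsFlabbyResolution {G M P F : Type} [Group G] [AddCommGroup M] [Module ℤ M]
    [AddCommGroup P] [Module ℤ P] [AddCommGroup F] [Module ℤ F]
    (ρM : Representation ℤ G M) (ρP : Representation ℤ G P) (ρF : Representation ℤ G F)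
    (i : M →ₗ[ℤ] P) (π : P →ₗ[ℤ] F) : Prop :=
  IsEquivariantExact ρM ρP ρF i π ∧ IsPermutationRep ρP ∧ IsFlabbyRep ρF

/-- `F` is a flabby quotient of `M`, i.e. it fits into some flabby resolution of `M`;
it then represents the flabby class `[M]^fl`. -/
def IsFlabbyQuotient {G M F : Type} [Group G] [AddCommGroup M] [Module ℤ M]
    [AddCommGroup F] [Module ℤ F]
    (ρM : Representation ℤ G M) (ρF : Representation ℤ G F) : Prop :=
  ∃ (P : Type) (_ : AddCommGroup P) (_ : Module ℤ P)
    (ρP : Representation ℤ G P) (i : M →ₗ[ℤ] P) (π : P →ₗ[ℤ] F),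
    IsFlabbyResolution ρM ρP ρF i π

/-- First projection of a subgroup of `G × G'` (surjective when the subgroup
is a subdirect product). -/
def projFst {G G' : Type} [Group G] [Group G'] (W : Subgroup (G × G')) : ↥W →* G :=
  (MonoidHom.fst G G').comp W.subtype

/-- Second projection of a subgroup of `G × G'`. -/
def projSnd {G G' : Type} [Group G] [Group G'] (W : Subgroup (G × G')) : ↥W →* G' :=
  (MonoidHom.snd G G').comp W.subtype

/-! ### Auxiliary lemmas -/

section BasicRepLemmas

variable {G H : Type} [Group G] [Group H]

lemma prodRep_apply {R A B : Type} [CommRing R] [AddCommGroup A] [Module R A]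
    [AddCommGroup B] [Module R B]
    (ρ : Representation R G A) (σ : Representation R G B) (g : G) (m : A × B) :
    prodRep ρ σ g m = (ρ g m.1, σ g m.2) := rfl

lemma repIso_refl {A : Type} [AddCommGroup A] [Module ℤ A] (ρ : Representation ℤ G A) :
    RepIso ρ ρ := ⟨LinearEquiv.refl ℤ A, fun _ _ => rfl⟩

lemma repIso_trans {A B C : Type} [AddCommGroup A] [Module ℤ A] [AddCommGroup B] [Module ℤ B]
    [AddCommGroup C] [Module ℤ C]
    {ρ : Representation ℤ G A} {τ : Representation ℤ G B} {υ : Representation ℤ G C}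
    (h₁ : RepIso ρ τ) (h₂ : RepIso τ υ) : RepIso ρ υ := by
  obtain ⟨e, he⟩ := h₁
  obtain ⟨f, hf⟩ := h₂
  exact ⟨e.trans f, fun g m => by
    simp only [LinearEquiv.trans_apply, he, hf]⟩

lemma repIso_prod {A B A' B' : Type} [AddCommGroup A] [Module ℤ A] [AddCommGroup B] [Module ℤ B]
    [AddCommGroup A'] [Module ℤ A'] [AddCommGroup B'] [Module ℤ B']
    {ρ : Representation ℤ G A} {ρ' : Representation ℤ G A'}
    {σ : Representation ℤ G B} {σ' : Representation ℤ G B'}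
    (h₁ : RepIso ρ ρ') (h₂ : RepIso σ σ') : RepIso (prodRep ρ σ) (prodRep ρ' σ') := by
  obtain ⟨e, he⟩ := h₁
  obtain ⟨f, hf⟩ := h₂
  refine ⟨e.prodCongr f, fun g m => ?_⟩
  simp only [prodRep_apply, LinearEquiv.prodCongr_apply, he, hf]

lemma repIso_prodComm {A B : Type} [AddCommGroup A] [Module ℤ A] [AddCommGroup B] [Module ℤ B]
    (ρ : Representation ℤ G A) (σ : Representation ℤ G B) :
    RepIso (prodRep ρ σ) (prodRep σ ρ) :=
  ⟨LinearEquiv.prodComm ℤ A B, fun _ _ => rfl⟩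

lemma repIso_prodAssoc {A B C : Type} [AddCommGroup A] [Module ℤ A] [AddCommGroup B] [Module ℤ B]
    [AddCommGroup C] [Module ℤ C]
    (ρ : Representation ℤ G A) (σ : Representation ℤ G B) (τ : Representation ℤ G C) :
    RepIso (prodRep (prodRep ρ σ) τ) (prodRep ρ (prodRep σ τ)) :=
  ⟨LinearEquiv.prodAssoc ℤ A B C, fun _ _ => rfl⟩

lemma repIso_symm {A B : Type} [AddCommGroup A] [Module ℤ A] [AddCommGroup B] [Module ℤ B]
    {ρ : Representation ℤ G A} {τ : Representation ℤ G B} (h : RepIso ρ τ) : RepIso τ ρ := by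
  obtain ⟨e, he⟩ := h
  refine ⟨e.symm, fun g m => e.injective ?_⟩
  rw [he, e.apply_symm_apply, e.apply_symm_apply]

lemma isPermutationRep_prod {A B : Type} [AddCommGroup A] [Module ℤ A] [AddCommGroup B]
    [Module ℤ B] {ρ : Representation ℤ G A} {σ : Representation ℤ G B}
    (hρ : IsPermutationRep ρ) (hσ : IsPermutationRep σ) : IsPermutationRep (prodRep ρ σ) := by
  obtain ⟨ι, _, b, hb⟩ := hρ
  obtain ⟨ι', _, b', hb'⟩ := hσ
  refine ⟨ι ⊕ ι', inferInstance, b.prod b', fun g i => ?_⟩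
  rcases i with i | i
  · obtain ⟨j, hj⟩ := hb g i
    refine ⟨Sum.inl j, ?_⟩
    have h1 : prodRep ρ σ g ((b.prod b') (Sum.inl i)) =
        (ρ g ((b.prod b') (Sum.inl i)).1, σ g ((b.prod b') (Sum.inl i)).2) := rfl
    rw [h1, Module.Basis.prod_apply_inl_fst, Module.Basis.prod_apply_inl_snd, map_zero, hj]
    exact Prod.ext (Module.Basis.prod_apply_inl_fst _ _ _).symm (Module.Basis.prod_apply_inl_snd _ _ _).symm
  · obtain ⟨j, hj⟩ := hb' g i
    refine ⟨Sum.inr j, ?_⟩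
    have h1 : prodRep ρ σ g ((b.prod b') (Sum.inr i)) =
        (ρ g ((b.prod b') (Sum.inr i)).1, σ g ((b.prod b') (Sum.inr i)).2) := rfl
    rw [h1, Module.Basis.prod_apply_inr_fst, Module.Basis.prod_apply_inr_snd, map_zero, hj]
    exact Prod.ext (Module.Basis.prod_apply_inr_fst _ _ _).symm (Module.Basis.prod_apply_inr_snd _ _ _).symm

lemma isPermutationRep_infl {A : Type} [AddCommGroup A] [Module ℤ A]
    {ρ : Representation ℤ G A} (hρ : IsPermutationRep ρ) (φ : H →* G) :
    IsPermutationRep (inflRep ρ φ) := by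
  obtain ⟨ι, _, b, hb⟩ := hρ
  exact ⟨ι, inferInstance, b, fun h i => hb (φ h) i⟩

lemma similarRep_infl {A B : Type} [AddCommGroup A] [Module ℤ A] [AddCommGroup B] [Module ℤ B]
    {ρ : Representation ℤ G A} {τ : Representation ℤ G B} (φ : H →* G)
    (h : SimilarRep ρ τ) : SimilarRep (inflRep ρ φ) (inflRep τ φ) := by
  obtain ⟨Q, _, _, σ, Q', _, _, σ', hσ, hσ', e, he⟩ := h
  exact ⟨Q, _, _, inflRep σ φ, Q', _, _, inflRep σ' φ, isPermutationRep_infl hσ φ,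
    isPermutationRep_infl hσ' φ, e, fun x m => he (φ x) m⟩

lemma similarRep_trans {A B C : Type} [AddCommGroup A] [Module ℤ A] [AddCommGroup B]
    [Module ℤ B] [AddCommGroup C] [Module ℤ C]
    {ρ : Representation ℤ G A} {τ : Representation ℤ G B} {υ : Representation ℤ G C}
    (h₁ : SimilarRep ρ τ) (h₂ : SimilarRep τ υ) : SimilarRep ρ υ := by
  obtain ⟨Q, _, _, σ, Q', _, _, σ', hσ, hσ', e⟩ := h₁
  obtain ⟨R, _, _, θ, R', _, _, θ', hθ, hθ', f⟩ := h₂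
  refine ⟨Q × R, inferInstance, inferInstance, prodRep σ θ, R' × Q', inferInstance,
    inferInstance, prodRep θ' σ', isPermutationRep_prod hσ hθ,
    isPermutationRep_prod hθ' hσ', ?_⟩
  -- ρ × (σ × θ) ≅ (ρ × σ) × θ ≅ (τ × σ') × θ ≅ (τ × θ) × σ' ≅ (υ × θ') × σ' ≅ υ × (θ' × σ')
  refine repIso_trans (repIso_symm (repIso_prodAssoc ρ σ θ)) ?_
  refine repIso_trans (repIso_prod e (repIso_refl θ)) ?_
  refine repIso_trans (repIso_prodAssoc τ σ' θ) ?_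
  refine repIso_trans (repIso_prod (repIso_refl τ) (repIso_prodComm σ' θ)) ?_
  refine repIso_trans (repIso_symm (repIso_prodAssoc τ θ σ')) ?_
  refine repIso_trans (repIso_prod f (repIso_refl σ')) ?_
  exact repIso_prodAssoc υ θ' σ'

end BasicRepLemmas
section Descent

variable {R H Γ : Type} [CommRing R] [Group H] [Group Γ]

/-- The submodule of `K`-fixed points of a representation. -/
def fixedSubmodule {Q : Type} [AddCommGroup Q] [Module R Q]
    (σ : Representation R H Q) (K : Subgroup H) : Submodule R Q where
  carrier := {q | ∀ k ∈ K, σ k q = q}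
  add_mem' := fun {a b} ha hb k hk => by rw [map_add, ha k hk, hb k hk]
  zero_mem' := fun k _ => map_zero _
  smul_mem' := fun c q hq k hk => by rw [LinearMap.map_smul, hq k hk]

lemma fixedSubmodule_map_mem {Q : Type} [AddCommGroup Q] [Module R Q]
    (σ : Representation R H Q) (K : Subgroup H) [K.Normal] (h : H) {q : Q}
    (hq : q ∈ fixedSubmodule σ K) : σ h q ∈ fixedSubmodule σ K := by
  intro k hk
  have h1 : σ k (σ h q) = σ (k * h) q := by rw [map_mul]; rfl
  have h2 : k * h = h * (h⁻¹ * k * h) := by group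
  have h3 : h⁻¹ * k * h ∈ K := by
    have := Subgroup.Normal.conj_mem ‹K.Normal› k hk h⁻¹
    simpa using this
  rw [h1, h2, map_mul σ h (h⁻¹ * k * h)]
  show σ h (σ (h⁻¹ * k * h) q) = σ h q
  rw [hq _ h3]

lemma sigma_eq_of_apply_eq {Q : Type} [AddCommGroup Q] [Module R Q]
    (σ : Representation R H Q) (φ : H →* Γ) {h₁ h₂ : H} (hh : φ h₁ = φ h₂) {q : Q}
    (hq : q ∈ fixedSubmodule σ φ.ker) : σ h₁ q = σ h₂ q := by
  have hk : h₂⁻¹ * h₁ ∈ φ.ker := by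
    rw [MonoidHom.mem_ker, map_mul, map_inv, hh, inv_mul_cancel]
  have h1 : σ h₂ (σ (h₂⁻¹ * h₁) q) = σ (h₂ * (h₂⁻¹ * h₁)) q := by
    rw [map_mul σ h₂ (h₂⁻¹ * h₁)]; rfl
  calc σ h₁ q = σ (h₂ * (h₂⁻¹ * h₁)) q := by rw [mul_inv_cancel_left]
    _ = σ h₂ (σ (h₂⁻¹ * h₁) q) := h1.symm
    _ = σ h₂ q := by rw [hq _ hk]

/-- Descent of a representation to the quotient on the kernel-fixed points. -/
noncomputable def descRep {Q : Type} [AddCommGroup Q] [Module R Q]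
    (σ : Representation R H Q) {φ : H →* Γ} (hφ : Function.Surjective φ) :
    Representation R Γ ↥(fixedSubmodule σ φ.ker) where
  toFun γ :=
    { toFun := fun n => ⟨σ (Function.surjInv hφ γ) n.val,
        fixedSubmodule_map_mem σ φ.ker _ n.2⟩
      map_add' := fun a b => Subtype.ext (by simp [map_add])
      map_smul' := fun c a => Subtype.ext (by simp) }
  map_one' := by
    apply LinearMap.ext; intro n
    apply Subtype.ext
    show σ (Function.surjInv hφ 1) n.val = n.val
    have : σ (Function.surjInv hφ 1) n.val = σ 1 n.val :=
      sigma_eq_of_apply_eq σ φ (by rw [Function.surjInv_eq hφ, map_one]) n.2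
    rw [this]; simp
  map_mul' := fun γ₁ γ₂ => by
    apply LinearMap.ext; intro n
    apply Subtype.ext
    show σ (Function.surjInv hφ (γ₁ * γ₂)) n.val
      = σ (Function.surjInv hφ γ₁) (σ (Function.surjInv hφ γ₂) n.val)
    have h1 : σ (Function.surjInv hφ (γ₁ * γ₂)) n.val
        = σ (Function.surjInv hφ γ₁ * Function.surjInv hφ γ₂) n.val :=
      sigma_eq_of_apply_eq σ φ (by rw [Function.surjInv_eq hφ, map_mul,
        Function.surjInv_eq hφ, Function.surjInv_eq hφ]) n.2
    rw [h1, map_mul]; rfl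

lemma descRep_coe {Q : Type} [AddCommGroup Q] [Module R Q]
    (σ : Representation R H Q) {φ : H →* Γ} (hφ : Function.Surjective φ) (γ : Γ)
    (n : ↥(fixedSubmodule σ φ.ker)) :
    (descRep σ hφ γ n).val = σ (Function.surjInv hφ γ) n.val := rfl

lemma descRep_apply_of_eq {Q : Type} [AddCommGroup Q] [Module R Q]
    (σ : Representation R H Q) {φ : H →* Γ} (hφ : Function.Surjective φ) (h : H)
    (n : ↥(fixedSubmodule σ φ.ker)) :
    (descRep σ hφ (φ h) n).val = σ h n.val := by
  rw [descRep_coe]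
  exact sigma_eq_of_apply_eq σ φ (Function.surjInv_eq hφ _) n.2

end Descent
section DescentPerm

variable {R H Γ : Type} [CommRing R] [Group H] [Group Γ]

lemma descRep_perm [Nontrivial R] {Q : Type} [AddCommGroup Q] [Module R Q]
    {σ : Representation R H Q} {φ : H →* Γ} (hφ : Function.Surjective φ)
    (hσ : IsPermutationRep σ) : IsPermutationRep (descRep σ hφ) := by
  classical
  obtain ⟨ι, _, b, hb⟩ := hσ
  have bne : Function.Injective b := b.injective
  choose act hact using hb
  have act_mul : ∀ g h i, act (g * h) i = act g (act h i) := by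
    intro g h i
    apply bne
    rw [← hact, ← hact, ← hact, map_mul]
    rfl
  have act_one : ∀ i, act 1 i = i := by
    intro i; apply bne; rw [← hact, map_one]; rfl
  have act_inv_left : ∀ g i, act g⁻¹ (act g i) = i := by
    intro g i; rw [← act_mul, inv_mul_cancel, act_one]
  have act_inv_right : ∀ g i, act g (act g⁻¹ i) = i := by
    intro g i; rw [← act_mul, mul_inv_cancel, act_one]
  have act_bij : ∀ g, Function.Bijective (act g) := fun g =>
    Function.bijective_iff_has_inverse.mpr ⟨act g⁻¹, act_inv_left g, act_inv_right g⟩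
  set K := φ.ker with hK
  let rel : ι → ι → Prop := fun i j => ∃ k ∈ K, act k i = j
  have rel_refl : ∀ i, rel i i := fun i => ⟨1, K.one_mem, act_one i⟩
  have rel_symm : ∀ {i j}, rel i j → rel j i := by
    rintro i j ⟨k, hk, hkij⟩
    exact ⟨k⁻¹, K.inv_mem hk, by rw [← hkij, act_inv_left]⟩
  have rel_trans : ∀ {i j l}, rel i j → rel j l → rel i l := by
    rintro i j l ⟨k, hk, h1⟩ ⟨m, hm, h2⟩
    exact ⟨m * k, K.mul_mem hm hk, by rw [act_mul, h1, h2]⟩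
  letI r : Setoid ι := ⟨rel, ⟨rel_refl, rel_symm, rel_trans⟩⟩
  let κ := Quotient r
  letI : Fintype κ := Fintype.ofFinite κ
  let fib : κ → Finset ι := fun o => Finset.univ.filter (fun i => (⟦i⟧ : κ) = o)
  have mem_fib : ∀ (o : κ) (i : ι), i ∈ fib o ↔ (⟦i⟧ : κ) = o := by
    intro o i; simp [fib]
  -- quotient classes are stable under `act k` for `k ∈ K`
  have mk_act : ∀ (k : H), k ∈ K → ∀ i : ι, (⟦act k i⟧ : κ) = ⟦i⟧ := fun k hk i =>
    Quotient.sound (rel_symm ⟨k, hk, rfl⟩)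
  -- the orbit sums
  let c : κ → Q := fun o => ∑ i ∈ fib o, b i
  have fix_sum : ∀ o, c o ∈ fixedSubmodule σ K := by
    intro o k hk
    have h1 : σ k (c o) = ∑ i ∈ fib o, b (act k i) := by
      rw [map_sum]; exact Finset.sum_congr rfl (fun i _ => hact k i)
    rw [h1]
    apply Finset.sum_bijective (act k) (act_bij k)
    · intro i
      rw [mem_fib, mem_fib, mk_act k hk]
    · intro i _; rfl
  let N := fixedSubmodule σ K
  let cN : κ → ↥N := fun o => ⟨c o, fix_sum o⟩
  -- linear independence of the orbit sums
  have hindep : LinearIndependent R cN := by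
    apply LinearIndependent.of_comp N.subtype
    have hcomp : (N.subtype ∘ cN : κ → Q) = c := rfl
    rw [hcomp, Fintype.linearIndependent_iff]
    intro g hg o
    have h1 : ∑ i : ι, g ⟦i⟧ • b i = 0 := by
      rw [← Finset.sum_fiberwise Finset.univ (fun i => (⟦i⟧ : κ)) (fun i => g ⟦i⟧ • b i)]
      rw [← hg]
      refine Finset.sum_congr rfl (fun o _ => ?_)
      rw [Finset.smul_sum]
      refine Finset.sum_congr rfl (fun i hi => ?_)
      rw [(mem_fib o i).mp hi]
    have hb' := b.linearIndependent
    rw [Fintype.linearIndependent_iff] at hb'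
    obtain ⟨i, hi⟩ := Quotient.exists_rep o
    rw [← hi]
    exact hb' _ h1 i
  -- the orbit sums span the fixed submodule
  have hspan : ⊤ ≤ Submodule.span R (Set.range cN) := by
    rintro ⟨x, hx⟩ -
    set coef : ι → R := fun i => b.repr x i with hcoef
    have hconst : ∀ k ∈ K, ∀ j, coef (act k j) = coef j := by
      intro k hk j
      have hsum : x = ∑ i : ι, coef i • b i := (b.sum_repr x).symm
      have h2 : ∑ i : ι, coef i • b (act k i) = ∑ i : ι, coef i • b i := by
        calc ∑ i : ι, coef i • b (act k i) = σ k x := by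
              rw [hsum, map_sum]
              exact Finset.sum_congr rfl (fun i _ => by
                rw [LinearMap.map_smul, hact])
          _ = x := hx k hk
          _ = ∑ i : ι, coef i • b i := hsum
      have h3 := congrArg (b.coord (act k j)) h2
      rw [map_sum, map_sum] at h3
      have hL : ∑ i : ι, (b.coord (act k j)) (coef i • b i) = coef (act k j) := by
        rw [Finset.sum_congr rfl (fun i _ => by
          rw [LinearMap.map_smul, Module.Basis.coord_apply, Module.Basis.repr_self,
            Finsupp.single_apply, smul_eq_mul, mul_ite, mul_one, mul_zero])]
        rw [Finset.sum_ite_eq' Finset.univ (act k j) coef]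
        simp
      have hR : ∑ i : ι, (b.coord (act k j)) (coef i • b (act k i)) = coef j := by
        rw [Finset.sum_congr rfl (fun i _ => by
          rw [LinearMap.map_smul, Module.Basis.coord_apply, Module.Basis.repr_self,
            Finsupp.single_apply,
            show (act k i = act k j) = (i = j) from propext (act_bij k).injective.eq_iff,
            smul_eq_mul, mul_ite, mul_one, mul_zero])]
        rw [Finset.sum_ite_eq' Finset.univ j coef]
        simp
      rw [hR, hL] at h3
      exact h3.symm
    have hwd : ∀ i j : ι, rel i j → coef i = coef j := by
      rintro i j ⟨k, hk, hkij⟩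
      rw [← hkij, hconst k hk]
    let coefQ : κ → R := Quotient.lift coef hwd
    have hcoefQ : ∀ i : ι, coefQ ⟦i⟧ = coef i := fun i => rfl
    have hxc : x = ∑ o : κ, coefQ o • c o := by
      have h4 : ∀ o : κ, coefQ o • c o = ∑ i ∈ fib o, coef i • b i := by
        intro o
        rw [Finset.smul_sum]
        refine Finset.sum_congr rfl (fun i hi => ?_)
        rw [← (mem_fib o i).mp hi, hcoefQ]
      rw [Finset.sum_congr rfl (fun o _ => h4 o),
        Finset.sum_fiberwise Finset.univ (fun i => (⟦i⟧ : κ)) (fun i => coef i • b i)]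
      exact (b.sum_repr x).symm
    have hcoe : N.subtype (∑ o : κ, coefQ o • cN o) = ∑ o : κ, coefQ o • c o := by
      rw [map_sum]
      exact Finset.sum_congr rfl (fun o _ => by rw [LinearMap.map_smul]; rfl)
    have hmem : (⟨x, hx⟩ : ↥N) = ∑ o : κ, coefQ o • cN o := by
      apply Subtype.ext
      show x = N.subtype (∑ o : κ, coefQ o • cN o)
      rw [hcoe, ← hxc]
    rw [hmem]
    exact Submodule.sum_smul_mem _ _ (fun o _ => Submodule.subset_span ⟨o, rfl⟩)
  let d : Module.Basis κ R ↥N := Module.Basis.mk hindep hspan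
  refine ⟨κ, inferInstance, d, fun γ o => ?_⟩
  set h := Function.surjInv hφ γ with hh
  obtain ⟨i₀, hi₀⟩ := Quotient.exists_rep o
  refine ⟨⟦act h i₀⟧, ?_⟩
  apply Subtype.ext
  rw [Module.Basis.mk_apply, Module.Basis.mk_apply]
  rw [descRep_coe]
  show σ h (c o) = c ⟦act h i₀⟧
  have hrelh : ∀ (g : H) (i j : ι), rel i j → rel (act g i) (act g j) := by
    rintro g i j ⟨k, hk, hkij⟩
    refine ⟨g * k * g⁻¹, ?_, ?_⟩
    · have := Subgroup.Normal.conj_mem (MonoidHom.normal_ker φ) k hk g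
      exact this
    · rw [show g * k * g⁻¹ = (g * k) * g⁻¹ from rfl, act_mul, act_mul, act_inv_left, hkij]
  have h1 : σ h (c o) = ∑ i ∈ fib o, b (act h i) := by
    rw [map_sum]; exact Finset.sum_congr rfl (fun i _ => hact h i)
  rw [h1]
  apply Finset.sum_bijective (act h) (act_bij h)
  · intro i
    rw [mem_fib, mem_fib]
    constructor
    · intro hmi
      rw [← hi₀] at hmi
      exact Quotient.sound (hrelh h i i₀ (Quotient.exact hmi))
    · intro hmi
      rw [← hi₀]
      have := Quotient.exact hmi
      have h2 : rel (act h⁻¹ (act h i)) (act h⁻¹ (act h i₀)) := hrelh h⁻¹ _ _ this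
      rw [act_inv_left, act_inv_left] at h2
      exact Quotient.sound h2
  · intro i _; rfl

end DescentPerm
section DescentEquiv

variable {R H Γ : Type} [CommRing R] [Group H] [Group Γ]

lemma descend_equiv {A B QA QB : Type}
    [AddCommGroup A] [Module R A] [AddCommGroup B] [Module R B]
    [AddCommGroup QA] [Module R QA] [AddCommGroup QB] [Module R QB]
    {φ : H →* Γ} (hφ : Function.Surjective φ)
    (α : Representation R Γ A) (β : Representation R Γ B)
    (σ : Representation R H QA) (σ' : Representation R H QB)
    (e : (A × QA) ≃ₗ[R] (B × QB))
    (he : ∀ (h : H) (m : A × QA),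
      e (prodRep (inflRep α φ) σ h m) = prodRep (inflRep β φ) σ' h (e m)) :
    ∃ E : (A × ↥(fixedSubmodule σ φ.ker)) ≃ₗ[R] (B × ↥(fixedSubmodule σ' φ.ker)),
      ∀ (γ : Γ) (m : A × ↥(fixedSubmodule σ φ.ker)),
        E (prodRep α (descRep σ hφ) γ m) = prodRep β (descRep σ' hφ) γ (E m) := by
  have he' : ∀ (h : H) (m : B × QB),
      e.symm (prodRep (inflRep β φ) σ' h m) = prodRep (inflRep α φ) σ h (e.symm m) := by
    intro h m
    apply e.injective
    rw [he, e.apply_symm_apply, e.apply_symm_apply]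
  have hmap : ∀ (a : A) (q : QA), q ∈ fixedSubmodule σ φ.ker →
      (e (a, q)).2 ∈ fixedSubmodule σ' φ.ker := by
    intro a q hq k hk
    have h1 := he k (a, q)
    rw [prodRep_apply, prodRep_apply] at h1
    have h2 : (inflRep α φ) k a = a := by
      show α (φ k) a = a
      rw [MonoidHom.mem_ker.mp hk, map_one]
      rfl
    have h3 : σ k q = q := hq k hk
    rw [h2, h3] at h1
    exact (congrArg Prod.snd h1).symm
  have hmap' : ∀ (b : B) (q : QB), q ∈ fixedSubmodule σ' φ.ker →
      (e.symm (b, q)).2 ∈ fixedSubmodule σ φ.ker := by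
    intro b q hq k hk
    have h1 := he' k (b, q)
    rw [prodRep_apply, prodRep_apply] at h1
    have h2 : (inflRep β φ) k b = b := by
      show β (φ k) b = b
      rw [MonoidHom.mem_ker.mp hk, map_one]
      rfl
    have h3 : σ' k q = q := hq k hk
    rw [h2, h3] at h1
    exact (congrArg Prod.snd h1).symm
  refine ⟨{
    toFun := fun p => ((e (p.1, p.2.val)).1, ⟨(e (p.1, p.2.val)).2, hmap _ _ p.2.2⟩)
    invFun := fun p => ((e.symm (p.1, p.2.val)).1, ⟨(e.symm (p.1, p.2.val)).2, hmap' _ _ p.2.2⟩)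
    map_add' := fun p q => by
      have h1 : e (((p + q).1, ((p + q).2 : QA)))
          = e (p.1, (p.2 : QA)) + e (q.1, (q.2 : QA)) := by
        rw [show (((p + q).1 : A), ((p + q).2 : QA))
          = (p.1, (p.2 : QA)) + (q.1, (q.2 : QA)) from rfl, map_add]
      refine Prod.ext ?_ (Subtype.ext ?_)
      · show (e ((p + q).1, ((p + q).2 : QA))).1
          = (e (p.1, (p.2 : QA))).1 + (e (q.1, (q.2 : QA))).1
        rw [h1]
        rfl
      · show (e ((p + q).1, ((p + q).2 : QA))).2
          = (e (p.1, (p.2 : QA))).2 + (e (q.1, (q.2 : QA))).2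
        rw [h1]
        rfl
    map_smul' := fun cr p => by
      have h1 : e (((cr • p).1, ((cr • p).2 : QA))) = cr • e (p.1, (p.2 : QA)) := by
        rw [show (((cr • p).1 : A), ((cr • p).2 : QA))
          = cr • ((p.1 : A), (p.2 : QA)) from rfl, map_smul]
      refine Prod.ext ?_ (Subtype.ext ?_)
      · show (e ((cr • p).1, ((cr • p).2 : QA))).1 = cr • (e (p.1, (p.2 : QA))).1
        rw [h1]
        rfl
      · show (e ((cr • p).1, ((cr • p).2 : QA))).2 = cr • (e (p.1, (p.2 : QA))).2
        rw [h1]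
        rfl
    left_inv := fun p => by
      have h1 : e.symm ((e (p.1, (p.2 : QA))).1, (e (p.1, (p.2 : QA))).2)
          = (p.1, (p.2 : QA)) := by
        rw [Prod.mk.eta, e.symm_apply_apply]
      refine Prod.ext ?_ (Subtype.ext ?_)
      · show (e.symm ((e (p.1, (p.2 : QA))).1, (e (p.1, (p.2 : QA))).2)).1 = p.1
        rw [h1]
      · show (e.symm ((e (p.1, (p.2 : QA))).1, (e (p.1, (p.2 : QA))).2)).2 = (p.2 : QA)
        rw [h1]
    right_inv := fun p => by
      have h1 : e ((e.symm (p.1, (p.2 : QB))).1, (e.symm (p.1, (p.2 : QB))).2)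
          = (p.1, (p.2 : QB)) := by
        rw [Prod.mk.eta, e.apply_symm_apply]
      refine Prod.ext ?_ (Subtype.ext ?_)
      · show (e ((e.symm (p.1, (p.2 : QB))).1, (e.symm (p.1, (p.2 : QB))).2)).1 = p.1
        rw [h1]
      · show (e ((e.symm (p.1, (p.2 : QB))).1, (e.symm (p.1, (p.2 : QB))).2)).2 = (p.2 : QB)
        rw [h1]
    }, ?_⟩
  intro γ m
  have hφh : φ (Function.surjInv hφ γ) = γ := Function.surjInv_eq hφ γ
  have h1 : ((prodRep α (descRep σ hφ) γ m).1, ((prodRep α (descRep σ hφ) γ m).2 : QA))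
      = prodRep (inflRep α φ) σ (Function.surjInv hφ γ) (m.1, (m.2 : QA)) := by
    rw [prodRep_apply, prodRep_apply]
    refine Prod.ext ?_ ?_
    · show α γ m.1 = α (φ (Function.surjInv hφ γ)) m.1
      rw [hφh]
    · show ((descRep σ hφ γ) m.2 : QA) = σ (Function.surjInv hφ γ) (m.2 : QA)
      rfl
  have h2 := he (Function.surjInv hφ γ) (m.1, (m.2 : QA))
  refine Prod.ext ?_ (Subtype.ext ?_)
  · show (e ((prodRep α (descRep σ hφ) γ m).1, ((prodRep α (descRep σ hφ) γ m).2 : QA))).1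
      = β γ (e (m.1, (m.2 : QA))).1
    rw [h1, h2, prodRep_apply]
    show β (φ (Function.surjInv hφ γ)) (e (m.1, (m.2 : QA))).1
      = β γ (e (m.1, (m.2 : QA))).1
    rw [hφh]
  · show (e ((prodRep α (descRep σ hφ) γ m).1, ((prodRep α (descRep σ hφ) γ m).2 : QA))).2
      = σ' (Function.surjInv hφ γ) (e (m.1, (m.2 : QA))).2
    rw [h1, h2, prodRep_apply]

end DescentEquiv

section SimilarDescend

variable {H Γ : Type} [Group H] [Group Γ]

lemma similarRep_descend {A B : Type} [AddCommGroup A] [Module ℤ A]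
    [AddCommGroup B] [Module ℤ B]
    {φ : H →* Γ} (hφ : Function.Surjective φ)
    (α : Representation ℤ Γ A) (β : Representation ℤ Γ B)
    (hs : SimilarRep (inflRep α φ) (inflRep β φ)) : SimilarRep α β := by
  obtain ⟨QA, _, _, σ, QB, _, _, σ', hσ, hσ', e, he⟩ := hs
  obtain ⟨E, hE⟩ := descend_equiv hφ α β σ σ' e he
  exact ⟨↥(fixedSubmodule σ φ.ker), _, _, descRep σ hφ,
    ↥(fixedSubmodule σ' φ.ker), _, _, descRep σ' hφ,
    descRep_perm hφ hσ, descRep_perm hφ hσ', E, hE⟩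

end SimilarDescend
set_option maxHeartbeats 2000000 in
/-- Weak stable equivalence of flabby classes is transitive: if the flabby
quotients `F` of `M` (a `G`-lattice) and `F'` of `M'` (a `G'`-lattice) become similar over
some subdirect product `W₁ ≤ G × G'`, and `F'` and `F''` (flabby quotient of the
`G''`-lattice `M''`) become similar over some subdirect product `W₂ ≤ G' × G''`, then `F`
and `F''` become similar over some subdirect product `W₃ ≤ G × G''`. -/
theorem weak_stably_equivalent_trans
    {G G' G'' : Type} [Group G] [Group G'] [Group G''] [Finite G] [Finite G'] [Finite G'']
    {M F M' F' M'' F'' : Type}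
    [AddCommGroup M] [Module ℤ M] [Module.Free ℤ M] [Module.Finite ℤ M]
    [AddCommGroup F] [Module ℤ F] [Module.Free ℤ F] [Module.Finite ℤ F]
    [AddCommGroup M'] [Module ℤ M'] [Module.Free ℤ M'] [Module.Finite ℤ M']
    [AddCommGroup F'] [Module ℤ F'] [Module.Free ℤ F'] [Module.Finite ℤ F']
    [AddCommGroup M''] [Module ℤ M''] [Module.Free ℤ M''] [Module.Finite ℤ M'']
    [AddCommGroup F''] [Module ℤ F''] [Module.Free ℤ F''] [Module.Finite ℤ F'']
    (ρM : Representation ℤ G M) (ρF : Representation ℤ G F)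
    (ρM' : Representation ℤ G' M') (ρF' : Representation ℤ G' F')
    (ρM'' : Representation ℤ G'' M'') (ρF'' : Representation ℤ G'' F'')
    (hq : IsFlabbyQuotient ρM ρF) (hq' : IsFlabbyQuotient ρM' ρF')
    (hq'' : IsFlabbyQuotient ρM'' ρF'')
    (W₁ : Subgroup (G × G'))
    (hW₁ : Function.Surjective (projFst W₁)) (hW₁' : Function.Surjective (projSnd W₁))
    (hsim₁ : SimilarRep (inflRep ρF (projFst W₁)) (inflRep ρF' (projSnd W₁)))
    (W₂ : Subgroup (G' × G''))
    (hW₂ : Function.Surjective (projFst W₂)) (hW₂' : Function.Surjective (projSnd W₂))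
    (hsim₂ : SimilarRep (inflRep ρF' (projFst W₂)) (inflRep ρF'' (projSnd W₂))) :
    ∃ W₃ : Subgroup (G × G''),
      Function.Surjective (projFst W₃) ∧ Function.Surjective (projSnd W₃) ∧
      SimilarRep (inflRep ρF (projFst W₃)) (inflRep ρF'' (projSnd W₃)) := by
  classical
  -- the composite subdirect product of `G × G''`
  let W₃ : Subgroup (G × G'') := {
    carrier := {p | ∃ g', (p.1, g') ∈ W₁ ∧ (g', p.2) ∈ W₂}
    one_mem' := ⟨1, W₁.one_mem, W₂.one_mem⟩
    mul_mem' := by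
      rintro a b ⟨ga, ha1, ha2⟩ ⟨gb, hb1, hb2⟩
      exact ⟨ga * gb, W₁.mul_mem ha1 hb1, W₂.mul_mem ha2 hb2⟩
    inv_mem' := by
      rintro a ⟨ga, ha1, ha2⟩
      exact ⟨ga⁻¹, W₁.inv_mem ha1, W₂.inv_mem ha2⟩ }
  -- the fiber product of `W₁` and `W₂` over `G'`
  let W : Subgroup (↥W₁ × ↥W₂) := {
    carrier := {p | ((p.1 : G × G')).2 = ((p.2 : G' × G'')).1}
    one_mem' := rfl
    mul_mem' := by
      rintro a b (ha : _ = _) (hb : _ = _)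
      show ((a.1 : G × G')).2 * ((b.1 : G × G')).2
        = ((a.2 : G' × G'')).1 * ((b.2 : G' × G'')).1
      rw [ha, hb]
    inv_mem' := by
      rintro a (ha : _ = _)
      show ((a.1 : G × G')).2⁻¹ = ((a.2 : G' × G'')).1⁻¹
      rw [ha] }
  let p₁ : ↥W →* ↥W₁ := (MonoidHom.fst ↥W₁ ↥W₂).comp W.subtype
  let p₂ : ↥W →* ↥W₂ := (MonoidHom.snd ↥W₁ ↥W₂).comp W.subtype
  let π₃ : ↥W →* ↥W₃ := {
    toFun := fun w => ⟨(((p₁ w : ↥W₁) : G × G').1, ((p₂ w : ↥W₂) : G' × G'').2),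
      ⟨((p₁ w : ↥W₁) : G × G').2, by
        constructor
        · show ((((p₁ w : ↥W₁) : G × G').1, ((p₁ w : ↥W₁) : G × G').2) : G × G') ∈ W₁
          rw [Prod.mk.eta]
          exact (p₁ w).2
        · have hw := w.2
          show (((p₁ w : ↥W₁) : G × G').2, ((p₂ w : ↥W₂) : G' × G'').2) ∈ W₂
          rw [show ((p₁ w : ↥W₁) : G × G').2 = ((p₂ w : ↥W₂) : G' × G'').1 from hw,
            Prod.mk.eta]
          exact (p₂ w).2⟩⟩
    map_one' := rfl
    map_mul' := fun a b => rfl }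
  have hπ₃ : Function.Surjective π₃ := by
    rintro ⟨⟨g, g''⟩, g', h1, h2⟩
    exact ⟨⟨(⟨(g, g'), h1⟩, ⟨(g', g''), h2⟩), rfl⟩, rfl⟩
  have hsurj1 : Function.Surjective (projFst W₃) := by
    intro g
    obtain ⟨w₁, hw₁⟩ := hW₁ g
    obtain ⟨w₂, hw₂⟩ := hW₂ ((w₁ : G × G').2)
    refine ⟨⟨(g, (w₂ : G' × G'').2), ⟨(w₁ : G × G').2, ?_, ?_⟩⟩, rfl⟩
    · show ((g, (w₁ : G × G').2) : G × G') ∈ W₁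
      rw [show g = (w₁ : G × G').1 from hw₁.symm, Prod.mk.eta]
      exact w₁.2
    · show (((w₁ : G × G').2, (w₂ : G' × G'').2) : G' × G'') ∈ W₂
      rw [show (w₁ : G × G').2 = (w₂ : G' × G'').1 from hw₂.symm, Prod.mk.eta]
      exact w₂.2
  have hsurj2 : Function.Surjective (projSnd W₃) := by
    intro g''
    obtain ⟨w₂, hw₂⟩ := hW₂' g''
    obtain ⟨w₁, hw₁⟩ := hW₁' ((w₂ : G' × G'').1)
    refine ⟨⟨((w₁ : G × G').1, g''), ⟨(w₂ : G' × G'').1, ?_, ?_⟩⟩, rfl⟩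
    · show (((w₁ : G × G').1, (w₂ : G' × G'').1) : G × G') ∈ W₁
      rw [show (w₂ : G' × G'').1 = (w₁ : G × G').2 from hw₁.symm, Prod.mk.eta]
      exact w₁.2
    · show (((w₂ : G' × G'').1, g'') : G' × G'') ∈ W₂
      rw [show g'' = (w₂ : G' × G'').2 from hw₂.symm, Prod.mk.eta]
      exact w₂.2
  -- inflate both similarities to `W` and compose
  have s₁ : SimilarRep (inflRep ρF ((projFst W₁).comp p₁))
      (inflRep ρF' ((projSnd W₁).comp p₁)) := similarRep_infl p₁ hsim₁
  have s₂ : SimilarRep (inflRep ρF' ((projFst W₂).comp p₂))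
      (inflRep ρF'' ((projSnd W₂).comp p₂)) := similarRep_infl p₂ hsim₂
  have hmid : (projSnd W₁).comp p₁ = (projFst W₂).comp p₂ :=
    MonoidHom.ext (fun w => w.2)
  rw [hmid] at s₁
  have s₃ := similarRep_trans s₁ s₂
  have e1 : (projFst W₁).comp p₁ = (projFst W₃).comp π₃ := MonoidHom.ext (fun w => rfl)
  have e2 : (projSnd W₂).comp p₂ = (projSnd W₃).comp π₃ := MonoidHom.ext (fun w => rfl)
  rw [e1, e2] at s₃
  have s₄ : SimilarRep (inflRep (inflRep ρF (projFst W₃)) π₃)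
      (inflRep (inflRep ρF'' (projSnd W₃)) π₃) := s₃
  exact ⟨W₃, hsurj1, hsurj2, similarRep_descend hπ₃ _ _ s₄⟩
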